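/- Properties of the modular conjugation: define the antilinear map Jₙ on L²(ℝⁿ, ℂ) by (Jₙψ)(θ₁,…,θₙ) := (∏_{1≤i<j≤n} S₂(θⱼ−θᵢ))·conj(ψ(θ₁,…,θₙ)). Then: (a) Jₙ is an antilinear isometric involution, Jₙ∘Jₙ = 1 and ⟨Jₙψ, Jₙφ⟩ = ⟨φ, ψ⟩; (b) Jₙ∘Pₙ = Pₙ∘Kₙ, where Kₙ is the antilinear map (Kₙψ)(θ₁,…,θₙ) := conj(ψ(θₙ,…,θ₁)); in particular Jₙψ = Kₙψ for every ψ with Pₙψ = ψ, and Jₙ maps ℋₙ := range(Pₙ) onto itself. -/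

import Mathlib

open MeasureTheory Complex

noncomputable section

/-- The `n`-fold L² space over rapidity variables. -/
abbrev Hsp (n : ℕ) : Type := Lp ℂ 2 (volume : Measure (Fin n → ℝ))

/-- The transposition τᵢ = (i, i+1) (0-based) in the symmetric group Sₙ. -/
def tau (n i : ℕ) (h : i + 1 < n) : Equiv.Perm (Fin n) :=
  Equiv.swap ⟨i, Nat.lt_of_succ_lt h⟩ ⟨i + 1, h⟩

/-- `D` is the S₂-twisted representation of Sₙ on L²(ℝⁿ) determined on the
transpositions τᵢ by `(D(τᵢ)ψ)(θ) = S₂(θ_{i+1} − θ_i)·ψ(θ ∘ τᵢ)`. -/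
def IsZamoRep (S₂ : ℝ → ℂ) (n : ℕ)
    (D : Equiv.Perm (Fin n) →* unitary (Hsp n →L[ℂ] Hsp n)) : Prop :=
  ∀ (i : ℕ) (hi : i + 1 < n) (ψ : Hsp n),
    ∀ᵐ θ ∂(volume : Measure (Fin n → ℝ)),
      ((D (tau n i hi) : Hsp n →L[ℂ] Hsp n) ψ) θ
        = S₂ (θ ⟨i + 1, hi⟩ - θ ⟨i, Nat.lt_of_succ_lt hi⟩)
            * ψ (fun m => θ (tau n i hi m))

/-- The symmetrization Pₙ = (1/n!)·Σ_{π ∈ Sₙ} Dₙ(π). -/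
def symProj {n : ℕ}
    (D : Equiv.Perm (Fin n) →* unitary (Hsp n →L[ℂ] Hsp n)) :
    Hsp n →L[ℂ] Hsp n :=
  (n.factorial : ℂ)⁻¹ • ∑ π : Equiv.Perm (Fin n), (D π : Hsp n →L[ℂ] Hsp n)

/-- The product ∏_{1 ≤ i < j ≤ n} S₂(θⱼ − θᵢ). -/
def pairProd (S₂ : ℝ → ℂ) {n : ℕ} (θ : Fin n → ℝ) : ℂ :=
  ∏ p ∈ Finset.univ.filter (fun p : Fin n × Fin n => p.1 < p.2), S₂ (θ p.2 - θ p.1)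

def coc (S₂ : ℝ → ℂ) {n : ℕ} (π : Equiv.Perm (Fin n)) (θ : Fin n → ℝ) : ℂ :=
  ∏ p ∈ Finset.univ.filter (fun p : Fin n × Fin n => p.1 < p.2 ∧ π⁻¹ p.2 < π⁻¹ p.1),
    S₂ (θ p.2 - θ p.1)

variable {S₂ : ℝ → ℂ} {n : ℕ}

lemma unit1 (hS₂abs : ∀ θ : ℝ, ‖S₂ θ‖ = 1) (x : ℝ) :
    starRingEnd ℂ (S₂ x) * S₂ x = 1 := by
  rw [mul_comm, Complex.mul_conj, Complex.normSq_eq_norm_sq, hS₂abs]; norm_num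

lemma unit2 (hS₂abs : ∀ θ : ℝ, ‖S₂ θ‖ = 1)
    (hS₂sym : ∀ θ : ℝ, S₂ (-θ) = starRingEnd ℂ (S₂ θ)) (x : ℝ) :
    S₂ x * S₂ (-x) = 1 := by
  rw [hS₂sym, Complex.mul_conj, Complex.normSq_eq_norm_sq, hS₂abs]; norm_num

lemma coc_alt (π : Equiv.Perm (Fin n)) (θ : Fin n → ℝ) :
    coc S₂ π θ = ∏ p ∈ Finset.univ.filter
        (fun p : Fin n × Fin n => p.1 < p.2 ∧ π p.2 < π p.1),
      S₂ (θ (π p.1) - θ (π p.2)) := by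
  refine Finset.prod_nbij' (fun p => (π⁻¹ p.2, π⁻¹ p.1)) (fun p => (π p.2, π p.1)) ?_ ?_ ?_ ?_ ?_
  · intro p hp; simp only [Finset.mem_filter, Finset.mem_univ, true_and] at hp ⊢
    exact ⟨hp.2, by simpa using hp.1⟩
  · intro p hp; simp only [Finset.mem_filter, Finset.mem_univ, true_and] at hp ⊢
    exact ⟨hp.2, by simpa using hp.1⟩
  · intro p hp; simp
  · intro p hp; simp
  · intro p hp; simp

lemma coc_mul (hS₂abs : ∀ θ : ℝ, ‖S₂ θ‖ = 1)
    (hS₂sym : ∀ θ : ℝ, S₂ (-θ) = starRingEnd ℂ (S₂ θ))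
    (σ π : Equiv.Perm (Fin n)) (θ : Fin n → ℝ) :
    coc S₂ (σ * π) θ = coc S₂ σ θ * coc S₂ π (fun m => θ (σ m)) := by
  classical
  set F : Fin n × Fin n → ℂ := fun p => S₂ (θ (σ (π p.1)) - θ (σ (π p.2))) with hF
  have hFswap : ∀ p : Fin n × Fin n, F p.swap = starRingEnd ℂ (F p) := by
    intro p; simp only [hF, Prod.fst_swap, Prod.snd_swap]
    rw [show θ (σ (π p.2)) - θ (σ (π p.1)) = -(θ (σ (π p.1)) - θ (σ (π p.2))) by ring, hS₂sym]
  have hA : coc S₂ (σ * π) θ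
      = ∏ p ∈ Finset.univ.filter
          (fun p : Fin n × Fin n => p.1 < p.2 ∧ σ (π p.2) < σ (π p.1)), F p := by
    rw [coc_alt]; rfl
  have hC : coc S₂ π (fun m => θ (σ m))
      = ∏ p ∈ Finset.univ.filter
          (fun p : Fin n × Fin n => p.1 < p.2 ∧ π p.2 < π p.1), F p := by
    rw [coc_alt]
  have hB : coc S₂ σ θ
      = ∏ p ∈ Finset.univ.filter
          (fun p : Fin n × Fin n => π p.1 < π p.2 ∧ σ (π p.2) < σ (π p.1)), F p := by
    rw [coc_alt]
    refine Finset.prod_nbij' (fun p => (π⁻¹ p.1, π⁻¹ p.2)) (fun p => (π p.1, π p.2)) ?_ ?_ ?_ ?_ ?_ <;>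
      intro p hp <;> simp only [Finset.mem_filter, Finset.mem_univ, true_and,
        Equiv.Perm.inv_def, Equiv.apply_symm_apply, hF] at hp ⊢ <;> simp [hp]
  -- split B into the part with p.1 < p.2 and the swapped part
  have hBsplit : (∏ p ∈ Finset.univ.filter
          (fun p : Fin n × Fin n => π p.1 < π p.2 ∧ σ (π p.2) < σ (π p.1)), F p)
      = (∏ p ∈ Finset.univ.filter
          (fun p : Fin n × Fin n => p.1 < p.2 ∧ (π p.1 < π p.2 ∧ σ (π p.2) < σ (π p.1))), F p)
        * ∏ p ∈ Finset.univ.filter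
          (fun p : Fin n × Fin n => p.1 < p.2 ∧ (π p.2 < π p.1 ∧ σ (π p.1) < σ (π p.2))),
            starRingEnd ℂ (F p) := by
    rw [← Finset.prod_filter_mul_prod_filter_not
      (Finset.univ.filter (fun p : Fin n × Fin n => π p.1 < π p.2 ∧ σ (π p.2) < σ (π p.1)))
      (fun p => p.1 < p.2)]
    congr 1
    · congr 1; ext p; simp only [Finset.mem_filter, Finset.mem_univ, true_and]; tauto
    · refine Finset.prod_nbij' Prod.swap Prod.swap ?_ ?_ ?_ ?_ ?_
      · intro p hp
        simp only [Finset.mem_filter, Finset.mem_univ, true_and, not_lt] at hp ⊢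
        obtain ⟨⟨h1, h2⟩, h3⟩ := hp
        have hne : p.2 ≠ p.1 := fun h => absurd (congrArg π h) (ne_of_lt h1).symm
        exact ⟨lt_of_le_of_ne h3 hne, h1, h2⟩
      · intro p hp
        simp only [Finset.mem_filter, Finset.mem_univ, true_and, not_lt] at hp ⊢
        exact ⟨⟨hp.2.1, hp.2.2⟩, le_of_lt hp.1⟩
      · intro p _; simp
      · intro p _; simp
      · intro p _; rw [hFswap, Complex.conj_conj]
  rw [hA, hB, hC, hBsplit]
  rw [show (Finset.univ.filter (fun p : Fin n × Fin n => p.1 < p.2 ∧ σ (π p.2) < σ (π p.1)))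
      = (Finset.univ.filter (fun p : Fin n × Fin n => p.1 < p.2)).filter
          (fun p => σ (π p.2) < σ (π p.1)) by rw [Finset.filter_filter]]
  rw [show (Finset.univ.filter
        (fun p : Fin n × Fin n => p.1 < p.2 ∧ (π p.1 < π p.2 ∧ σ (π p.2) < σ (π p.1))))
      = (Finset.univ.filter (fun p : Fin n × Fin n => p.1 < p.2)).filter
          (fun p => π p.1 < π p.2 ∧ σ (π p.2) < σ (π p.1)) by rw [Finset.filter_filter]]
  rw [show (Finset.univ.filter
        (fun p : Fin n × Fin n => p.1 < p.2 ∧ (π p.2 < π p.1 ∧ σ (π p.1) < σ (π p.2))))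
      = (Finset.univ.filter (fun p : Fin n × Fin n => p.1 < p.2)).filter
          (fun p => π p.2 < π p.1 ∧ σ (π p.1) < σ (π p.2)) by rw [Finset.filter_filter]]
  rw [show (Finset.univ.filter (fun p : Fin n × Fin n => p.1 < p.2 ∧ π p.2 < π p.1))
      = (Finset.univ.filter (fun p : Fin n × Fin n => p.1 < p.2)).filter
          (fun p => π p.2 < π p.1) by rw [Finset.filter_filter]]
  simp only [Finset.prod_filter]
  rw [← Finset.prod_mul_distrib, ← Finset.prod_mul_distrib]
  refine Finset.prod_congr rfl ?_
  intro p _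
  by_cases hlt : p.1 < p.2
  swap
  · simp [hlt]
  have hne : π p.1 ≠ π p.2 := fun h => absurd (π.injective h) (ne_of_lt hlt)
  have hne2 : σ (π p.1) ≠ σ (π p.2) := fun h => absurd (σ.injective h) hne
  simp only [if_pos hlt]
  by_cases hP : π p.1 < π p.2 <;> by_cases hQ : σ (π p.2) < σ (π p.1)
  · simp [hP, hQ, not_lt_of_gt hP, not_lt_of_gt hQ]
  · simp [hP, hQ, not_lt_of_gt hP]
  · simp [hP, hQ, lt_of_le_of_ne (not_lt.1 hP) (Ne.symm hne), not_lt_of_gt hQ]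
  · have hR : π p.2 < π p.1 := lt_of_le_of_ne (not_lt.1 hP) (Ne.symm hne)
    have hQ' : σ (π p.1) < σ (π p.2) := lt_of_le_of_ne (not_lt.1 hQ) hne2
    simp only [hP, hQ, hR, hQ', if_neg hQ, false_and, if_false, true_and, if_pos, and_true]
    rw [one_mul, unit1 hS₂abs]

lemma coc_one (θ : Fin n → ℝ) : coc S₂ 1 θ = 1 := by
  rw [coc, Finset.prod_eq_one]
  intro p hp
  simp only [Finset.mem_filter, inv_one, Equiv.Perm.one_apply] at hp
  exact absurd hp.2.2 (not_lt_of_gt hp.2.1)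

lemma coc_tau (i : ℕ) (hi : i + 1 < n) (θ : Fin n → ℝ) :
    coc S₂ (tau n i hi) θ = S₂ (θ ⟨i + 1, hi⟩ - θ ⟨i, Nat.lt_of_succ_lt hi⟩) := by
  have : Finset.univ.filter
      (fun p : Fin n × Fin n => p.1 < p.2 ∧ (tau n i hi)⁻¹ p.2 < (tau n i hi)⁻¹ p.1)
      = {(⟨i, Nat.lt_of_succ_lt hi⟩, ⟨i + 1, hi⟩)} := by
    ext ⟨p1, p2⟩
    rw [Finset.mem_filter]
    simp only [Finset.mem_filter, Finset.mem_univ, true_and, Finset.mem_singleton, tau,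
      Equiv.Perm.inv_def, Equiv.symm_swap, Prod.mk.injEq]
    set a : Fin n := ⟨i, Nat.lt_of_succ_lt hi⟩ with ha
    set b : Fin n := ⟨i + 1, hi⟩ with hb
    have hab : a < b := by simp [ha, hb, Fin.lt_def]
    constructor
    · rintro ⟨h1, h2⟩
      rcases eq_or_ne p1 a with rfl | ha1
      · rcases eq_or_ne p2 b with rfl | hb2
        · exact ⟨rfl, rfl⟩
        · rcases eq_or_ne p2 a with rfl | ha2
          · exact absurd h1 (lt_irrefl _)
          · rw [Equiv.swap_apply_of_ne_of_ne ha2 hb2, Equiv.swap_apply_left] at h2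
            simp only [Fin.lt_def, ha, hb] at h1 h2
            omega
      · rcases eq_or_ne p1 b with rfl | hb1
        · rcases eq_or_ne p2 a with rfl | ha2
          · exact absurd h1 (not_lt_of_gt hab)
          · rcases eq_or_ne p2 b with rfl | hb2
            · exact absurd h1 (lt_irrefl _)
            · rw [Equiv.swap_apply_of_ne_of_ne ha2 hb2, Equiv.swap_apply_right] at h2
              exact absurd (lt_trans h2 (lt_trans hab h1)) (lt_irrefl _)
        · rw [Equiv.swap_apply_of_ne_of_ne ha1 hb1] at h2
          rcases eq_or_ne p2 a with rfl | ha2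
          · rw [Equiv.swap_apply_left] at h2
            exact absurd (lt_trans h2 h1) (not_lt_of_gt hab)
          · rcases eq_or_ne p2 b with rfl | hb2
            · rw [Equiv.swap_apply_right] at h2
              simp only [Fin.lt_def, ha, hb] at h1 h2
              omega
            · rw [Equiv.swap_apply_of_ne_of_ne ha2 hb2] at h2
              exact absurd h1 (not_lt_of_gt h2)
    · rintro ⟨rfl, rfl⟩
      refine ⟨hab, ?_⟩
      rw [Equiv.swap_apply_left, Equiv.swap_apply_right]
      exact hab
  rw [coc, this, Finset.prod_singleton]

lemma coc_rev (θ : Fin n → ℝ) : coc S₂ (Fin.revPerm : Equiv.Perm (Fin n)) θ = pairProd S₂ θ := by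
  rw [coc, pairProd]
  congr 1
  ext p
  simp only [Finset.mem_filter, Finset.mem_univ, true_and, and_iff_left_iff_imp,
    Equiv.Perm.inv_def, Fin.revPerm_symm, Fin.revPerm_apply, Fin.rev_lt_rev]
  exact id

lemma pairProd_split (ρ : Equiv.Perm (Fin n)) (θ : Fin n → ℝ) :
    pairProd S₂ θ = coc S₂ ρ θ * coc S₂ (ρ * Fin.revPerm) θ := by
  rw [pairProd, ← Finset.prod_filter_mul_prod_filter_not
    (Finset.univ.filter (fun p : Fin n × Fin n => p.1 < p.2))
    (fun p => ρ⁻¹ p.2 < ρ⁻¹ p.1)]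
  congr 1
  · rw [coc, Finset.filter_filter]
  · rw [coc, Finset.filter_filter]
    apply Finset.prod_congr _ (fun _ _ => rfl)
    ext p
    simp only [Finset.mem_filter, Finset.mem_univ, true_and, and_congr_right_iff]
    intro hlt
    have hne : ρ⁻¹ p.1 ≠ ρ⁻¹ p.2 := fun h => absurd (ρ⁻¹.injective h) (ne_of_lt hlt)
    have hrev : (Fin.revPerm : Equiv.Perm (Fin n))⁻¹ = Fin.revPerm := by
      rw [Equiv.Perm.inv_def, Fin.revPerm_symm]
    rw [mul_inv_rev, Equiv.Perm.mul_apply, Equiv.Perm.mul_apply, hrev]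
    simp only [Fin.revPerm_apply, Fin.rev_lt_rev]
    constructor
    · intro h
      exact lt_of_le_of_ne (not_lt.1 h) hne
    · intro h
      exact not_lt_of_gt h

lemma coc_unit (hS₂abs : ∀ θ : ℝ, ‖S₂ θ‖ = 1) (π : Equiv.Perm (Fin n))
    (θ : Fin n → ℝ) : starRingEnd ℂ (coc S₂ π θ) * coc S₂ π θ = 1 := by
  rw [coc, map_prod, ← Finset.prod_mul_distrib]
  exact Finset.prod_eq_one fun p _ => unit1 hS₂abs _

lemma pairProd_unit (hS₂abs : ∀ θ : ℝ, ‖S₂ θ‖ = 1)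
    (θ : Fin n → ℝ) : starRingEnd ℂ (pairProd S₂ θ) * pairProd S₂ θ = 1 := by
  rw [pairProd, map_prod, ← Finset.prod_mul_distrib]
  exact Finset.prod_eq_one fun p _ => unit1 hS₂abs _

lemma abs_pairProd (hS₂abs : ∀ θ : ℝ, ‖S₂ θ‖ = 1)
    (θ : Fin n → ℝ) : ‖pairProd S₂ θ‖ = 1 := by
  rw [pairProd, norm_prod]
  exact Finset.prod_eq_one fun p _ => hS₂abs _

lemma mp_perm (σ : Equiv.Perm (Fin n)) :
    MeasurePreserving (fun θ : Fin n → ℝ => fun m => θ (σ m)) volume volume := by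
  have h := MeasureTheory.volume_measurePreserving_piCongrLeft (fun _ : Fin n => ℝ) σ.symm
  have he : ⇑(MeasurableEquiv.piCongrLeft (fun _ : Fin n => ℝ) σ.symm)
      = fun θ : Fin n → ℝ => fun m => θ (σ m) := by
    funext θ b
    have := MeasurableEquiv.piCongrLeft_apply_apply σ.symm
      (β := fun _ : Fin n => ℝ) θ (σ b)
    simpa using this
  rwa [he] at h

lemma ae_comp_perm (σ : Equiv.Perm (Fin n)) {f g : (Fin n → ℝ) → ℂ}
    (h : f =ᵐ[(volume : Measure (Fin n → ℝ))] g) :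
    (fun θ : Fin n → ℝ => f (fun m => θ (σ m)))
      =ᵐ[(volume : Measure (Fin n → ℝ))] (fun θ => g (fun m => θ (σ m))) :=
  (mp_perm σ).quasiMeasurePreserving.ae_eq h

lemma perm_mem_closure_tau (n : ℕ) (π : Equiv.Perm (Fin n)) :
    π ∈ Submonoid.closure
      {s : Equiv.Perm (Fin n) | ∃ (i : ℕ) (hi : i + 1 < n), s = tau n i hi} := by
  cases n with
  | zero =>
    have : π = 1 := Subsingleton.elim _ _
    rw [this]; exact Submonoid.one_mem _
  | succ m =>
    have h := Equiv.Perm.mclosure_swap_castSucc_succ m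
    have hmem : π ∈ Submonoid.closure
        (Set.range fun i : Fin m => Equiv.swap (Fin.castSucc i) i.succ) := by
      rw [h]; trivial
    refine Submonoid.closure_mono ?_ hmem
    rintro s ⟨i, rfl⟩
    refine ⟨i.val, by omega, ?_⟩
    unfold tau
    congr 1

lemma Dformula {S₂ : ℝ → ℂ} {n : ℕ}
    (hS₂abs : ∀ θ : ℝ, ‖S₂ θ‖ = 1)
    (hS₂sym : ∀ θ : ℝ, S₂ (-θ) = starRingEnd ℂ (S₂ θ))
    (D : Equiv.Perm (Fin n) →* unitary (Hsp n →L[ℂ] Hsp n))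
    (hD : IsZamoRep S₂ n D) (π : Equiv.Perm (Fin n)) (ψ : Hsp n) :
    (⇑((D π : Hsp n →L[ℂ] Hsp n) ψ)) =ᵐ[(volume : Measure (Fin n → ℝ))]
      fun θ => coc S₂ π θ * ψ (fun m => θ (π m)) := by
  revert ψ
  have hx := perm_mem_closure_tau n π
  induction hx using Submonoid.closure_induction with
  | mem x hxs =>
    obtain ⟨i, hi, rfl⟩ := hxs
    intro ψ
    filter_upwards [hD i hi ψ] with θ hθ
    rw [hθ, coc_tau]
  | one =>
    intro ψ
    have : ((D 1 : Hsp n →L[ℂ] Hsp n) ψ) = ψ := by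
      rw [map_one]; rfl
    rw [this]
    filter_upwards with θ
    simp [coc_one]
  | mul x y hxc hyc hx hy =>
    intro ψ
    have hxy : ((D (x * y) : Hsp n →L[ℂ] Hsp n) ψ)
        = (D x : Hsp n →L[ℂ] Hsp n) ((D y : Hsp n →L[ℂ] Hsp n) ψ) := by
      rw [map_mul]; rfl
    rw [hxy]
    have h1 := hx ((D y : Hsp n →L[ℂ] Hsp n) ψ)
    have h2 := ae_comp_perm x (hy ψ)
    filter_upwards [h1, h2] with θ hθ1 hθ2
    rw [hθ1, hθ2, coc_mul hS₂abs hS₂sym]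
    ring_nf
    rfl

lemma Lp_coeFn_sum {n : ℕ} {ι : Type*} (s : Finset ι) (f : ι → Hsp n) :
    ⇑(∑ i ∈ s, f i) =ᵐ[(volume : Measure (Fin n → ℝ))] fun θ => ∑ i ∈ s, f i θ := by
  classical
  induction s using Finset.induction with
  | empty =>
    simp only [Finset.sum_empty]
    exact Lp.coeFn_zero _ _ _
  | insert a t hni ih =>
    rw [Finset.sum_insert hni]
    filter_upwards [Lp.coeFn_add (f a) (∑ i ∈ t, f i), ih] with θ h1 h2
    simp only [h1, Pi.add_apply, h2, Finset.sum_insert hni]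

lemma symProj_apply {n : ℕ} (D : Equiv.Perm (Fin n) →* unitary (Hsp n →L[ℂ] Hsp n))
    (ψ : Hsp n) :
    symProj D ψ = (n.factorial : ℂ)⁻¹ •
      ∑ π : Equiv.Perm (Fin n), (D π : Hsp n →L[ℂ] Hsp n) ψ := by
  rw [symProj, ContinuousLinearMap.smul_apply, ContinuousLinearMap.sum_apply]

lemma D_symProj {n : ℕ} (D : Equiv.Perm (Fin n) →* unitary (Hsp n →L[ℂ] Hsp n))
    (σ : Equiv.Perm (Fin n)) (ψ : Hsp n) :
    (D σ : Hsp n →L[ℂ] Hsp n) (symProj D ψ) = symProj D ψ := by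
  rw [symProj_apply, _root_.map_smul, map_sum]
  congr 1
  have : ∀ π : Equiv.Perm (Fin n),
      (D σ : Hsp n →L[ℂ] Hsp n) ((D π : Hsp n →L[ℂ] Hsp n) ψ)
        = (D (σ * π) : Hsp n →L[ℂ] Hsp n) ψ := by
    intro π
    rw [← ContinuousLinearMap.mul_apply, map_mul]
    rfl
  simp only [this]
  exact Equiv.sum_comp (Equiv.mulLeft σ) (fun π => (D π : Hsp n →L[ℂ] Hsp n) ψ)

lemma symProj_idem {n : ℕ} (D : Equiv.Perm (Fin n) →* unitary (Hsp n →L[ℂ] Hsp n))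
    (ψ : Hsp n) : symProj D (symProj D ψ) = symProj D ψ := by
  rw [symProj_apply D (symProj D ψ)]
  simp only [D_symProj]
  rw [Finset.sum_const, Finset.card_univ, ← Nat.cast_smul_eq_nsmul ℂ, smul_smul,
    Fintype.card_perm, Fintype.card_fin, inv_mul_cancel₀, one_smul]
  exact_mod_cast Nat.factorial_ne_zero n

lemma symProj_ae {S₂ : ℝ → ℂ} {n : ℕ}
    (hS₂abs : ∀ θ : ℝ, ‖S₂ θ‖ = 1)
    (hS₂sym : ∀ θ : ℝ, S₂ (-θ) = starRingEnd ℂ (S₂ θ))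
    (D : Equiv.Perm (Fin n) →* unitary (Hsp n →L[ℂ] Hsp n))
    (hD : IsZamoRep S₂ n D) (ψ : Hsp n) :
    ⇑(symProj D ψ) =ᵐ[(volume : Measure (Fin n → ℝ))]
      fun θ => (n.factorial : ℂ)⁻¹ *
        ∑ π : Equiv.Perm (Fin n), coc S₂ π θ * ψ (fun m => θ (π m)) := by
  rw [symProj_apply]
  have hall : ∀ᵐ θ ∂(volume : Measure (Fin n → ℝ)), ∀ π : Equiv.Perm (Fin n),
      ((D π : Hsp n →L[ℂ] Hsp n) ψ) θ = coc S₂ π θ * ψ (fun m => θ (π m)) :=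
    (MeasureTheory.ae_all_iff).2 fun π => Dformula hS₂abs hS₂sym D hD π ψ
  filter_upwards [Lp.coeFn_smul ((n.factorial : ℂ)⁻¹)
      (∑ π : Equiv.Perm (Fin n), (D π : Hsp n →L[ℂ] Hsp n) ψ),
    Lp_coeFn_sum Finset.univ (fun π : Equiv.Perm (Fin n) => (D π : Hsp n →L[ℂ] Hsp n) ψ),
    hall] with θ h1 h2 h3
  rw [h1, Pi.smul_apply, h2, smul_eq_mul]
  congr 1
  exact Finset.sum_congr rfl fun π _ => h3 π

set_option maxHeartbeats 2000000 in
/-- Properties of the modular conjugation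
(Jψ)(θ) = ∏_{i<j} S₂(θⱼ−θᵢ)·conj(ψ(θ)): it is an antilinear isometric involution with
⟨Jψ, Jφ⟩ = ⟨φ, ψ⟩; moreover J∘Pₙ = Pₙ∘Kₙ with (Kψ)(θ₁,…,θₙ) = conj(ψ(θₙ,…,θ₁)), so
J = K on ℋₙ and J maps ℋₙ onto itself. -/
theorem statement12 (S₂ : ℝ → ℂ) (hS₂meas : Measurable S₂)
    (hS₂abs : ∀ θ : ℝ, ‖S₂ θ‖ = 1)
    (hS₂sym : ∀ θ : ℝ, S₂ (-θ) = starRingEnd ℂ (S₂ θ))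
    (n : ℕ)
    (D : Equiv.Perm (Fin n) →* unitary (Hsp n →L[ℂ] Hsp n))
    (hD : IsZamoRep S₂ n D)
    (J : Hsp n → Hsp n)
    (hJ : ∀ ψ : Hsp n, ∀ᵐ θ ∂(volume : Measure (Fin n → ℝ)),
      (J ψ) θ = pairProd S₂ θ * starRingEnd ℂ (ψ θ))
    (K : Hsp n → Hsp n)
    (hK : ∀ ψ : Hsp n, ∀ᵐ θ ∂(volume : Measure (Fin n → ℝ)),
      (K ψ) θ = starRingEnd ℂ (ψ (fun i => θ i.rev))) :
    -- (a) J is an antilinear isometric involution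
    (∀ ψ φ : Hsp n, J (ψ + φ) = J ψ + J φ) ∧
    (∀ (c : ℂ) (ψ : Hsp n), J (c • ψ) = (starRingEnd ℂ c) • J ψ) ∧
    (∀ ψ : Hsp n, ‖J ψ‖ = ‖ψ‖) ∧
    (∀ ψ : Hsp n, J (J ψ) = ψ) ∧
    (∀ ψ φ : Hsp n, (inner ℂ (J ψ) (J φ) : ℂ) = (inner ℂ φ ψ : ℂ)) ∧
    -- (b) J∘Pₙ = Pₙ∘Kₙ, J = K on ℋₙ, and J(ℋₙ) = ℋₙ
    (∀ ψ : Hsp n, J (symProj D ψ) = symProj D (K ψ)) ∧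
    (∀ ψ : Hsp n, symProj D ψ = ψ → J ψ = K ψ) ∧
    (J '' {ψ : Hsp n | symProj D ψ = ψ} = {ψ : Hsp n | symProj D ψ = ψ}) := by
  classical
  -- J = D(rev) ∘ K
  have hrevfix : ∀ θ : Fin n → ℝ, (fun i : Fin n => θ ((Fin.revPerm i.rev))) = θ := by
    intro θ; funext i; simp [Fin.rev_rev]
  have hJDK : ∀ ψ : Hsp n, J ψ = (D Fin.revPerm : Hsp n →L[ℂ] Hsp n) (K ψ) := by
    intro ψ
    refine (Lp.ext ?_).symm
    filter_upwards [hJ ψ, Dformula hS₂abs hS₂sym D hD Fin.revPerm (K ψ),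
      ae_comp_perm Fin.revPerm (hK ψ)] with θ h1 h2 h3
    rw [h2, h3, coc_rev, hrevfix θ, h1]
  -- (1) additivity
  have hadd : ∀ ψ φ : Hsp n, J (ψ + φ) = J ψ + J φ := by
    intro ψ φ
    apply Lp.ext
    filter_upwards [hJ (ψ + φ), hJ ψ, hJ φ, Lp.coeFn_add (J ψ) (J φ), Lp.coeFn_add ψ φ]
      with θ h1 h2 h3 h4 h5
    simp only [Pi.add_apply] at h4 h5
    rw [h1, h4, h5, h2, h3, map_add]
    ring
  -- (2) conjugate homogeneity
  have hsmul : ∀ (c : ℂ) (ψ : Hsp n), J (c • ψ) = (starRingEnd ℂ c) • J ψ := by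
    intro c ψ
    apply Lp.ext
    filter_upwards [hJ (c • ψ), hJ ψ, Lp.coeFn_smul (starRingEnd ℂ c) (J ψ),
      Lp.coeFn_smul c ψ] with θ h1 h2 h3 h4
    simp only [Pi.smul_apply, smul_eq_mul] at h3 h4
    rw [h1, h3, h4, h2, map_mul]
    ring
  -- (3) isometry
  have hnorm : ∀ ψ : Hsp n, ‖J ψ‖ = ‖ψ‖ := by
    intro ψ
    rw [Lp.norm_def, Lp.norm_def]
    congr 1
    apply MeasureTheory.eLpNorm_congr_norm_ae
    filter_upwards [hJ ψ] with θ h1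
    rw [h1]
    rw [norm_mul,
      abs_pairProd hS₂abs, Complex.norm_conj, one_mul]
  -- (4) involution
  have hinv : ∀ ψ : Hsp n, J (J ψ) = ψ := by
    intro ψ
    apply Lp.ext
    filter_upwards [hJ (J ψ), hJ ψ] with θ h1 h2
    rw [h1, h2, map_mul, Complex.conj_conj]
    calc pairProd S₂ θ * (starRingEnd ℂ (pairProd S₂ θ) * ψ θ)
        = (starRingEnd ℂ (pairProd S₂ θ) * pairProd S₂ θ) * ψ θ := by ring
      _ = ψ θ := by rw [pairProd_unit hS₂abs, one_mul]
  -- (5) antiunitarity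
  have hinner : ∀ ψ φ : Hsp n, (inner ℂ (J ψ) (J φ) : ℂ) = (inner ℂ φ ψ : ℂ) := by
    intro ψ φ
    rw [MeasureTheory.L2.inner_def, MeasureTheory.L2.inner_def]
    apply integral_congr_ae
    filter_upwards [hJ ψ, hJ φ] with θ h1 h2
    rw [RCLike.inner_apply', RCLike.inner_apply', h1, h2, map_mul, Complex.conj_conj]
    calc starRingEnd ℂ (pairProd S₂ θ) * ψ θ * (pairProd S₂ θ * starRingEnd ℂ (φ θ))
        = (starRingEnd ℂ (pairProd S₂ θ) * pairProd S₂ θ) * (starRingEnd ℂ (φ θ) * ψ θ) := by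
          ring
      _ = starRingEnd ℂ (φ θ) * ψ θ := by rw [pairProd_unit hS₂abs, one_mul]
  -- (6) J ∘ P = P ∘ K
  have hJP : ∀ ψ : Hsp n, J (symProj D ψ) = symProj D (K ψ) := by
    intro ψ
    apply Lp.ext
    have hKall : ∀ᵐ θ ∂(volume : Measure (Fin n → ℝ)), ∀ π : Equiv.Perm (Fin n),
        (K ψ) (fun m => θ (π m)) = starRingEnd ℂ (ψ (fun i => θ (π i.rev))) :=
      (MeasureTheory.ae_all_iff).2 fun π => ae_comp_perm π (hK ψ)
    filter_upwards [hJ (symProj D ψ), symProj_ae hS₂abs hS₂sym D hD ψ,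
      symProj_ae hS₂abs hS₂sym D hD (K ψ), hKall] with θ h1 h2 h3 h4
    rw [h1, h2, h3]
    simp only [h4]
    have hkey : ∀ ρ : Equiv.Perm (Fin n),
        coc S₂ (ρ * Fin.revPerm) θ = pairProd S₂ θ * starRingEnd ℂ (coc S₂ ρ θ) := by
      intro ρ
      have hu := coc_unit hS₂abs ρ θ
      calc coc S₂ (ρ * Fin.revPerm) θ
          = (starRingEnd ℂ (coc S₂ ρ θ) * coc S₂ ρ θ) * coc S₂ (ρ * Fin.revPerm) θ := by
            rw [hu, one_mul]
        _ = (coc S₂ ρ θ * coc S₂ (ρ * Fin.revPerm) θ) * starRingEnd ℂ (coc S₂ ρ θ) := by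
            ring
        _ = pairProd S₂ θ * starRingEnd ℂ (coc S₂ ρ θ) := by rw [← pairProd_split]
    have hre : (∑ π : Equiv.Perm (Fin n),
          coc S₂ π θ * starRingEnd ℂ (ψ (fun i => θ (π i.rev))))
        = ∑ ρ : Equiv.Perm (Fin n),
            coc S₂ (ρ * Fin.revPerm) θ * starRingEnd ℂ (ψ (fun m => θ (ρ m))) := by
      have hone : (Fin.revPerm : Equiv.Perm (Fin n)) * Fin.revPerm = 1 := by
        ext i; simp [Equiv.Perm.mul_apply, Fin.rev_rev]
      refine Finset.sum_nbij' (fun π => π * Fin.revPerm) (fun ρ => ρ * Fin.revPerm)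
        (fun _ _ => Finset.mem_univ _) (fun _ _ => Finset.mem_univ _) ?_ ?_ ?_
      · intro π _
        show π * Fin.revPerm * Fin.revPerm = π
        rw [mul_assoc, hone, mul_one]
      · intro ρ _
        show ρ * Fin.revPerm * Fin.revPerm = ρ
        rw [mul_assoc, hone, mul_one]
      · intro π _
        have h1 : (fun m : Fin n => θ ((π * Fin.revPerm : Equiv.Perm (Fin n)) m)) = fun i : Fin n => θ (π i.rev) := by
          funext m
          rw [Equiv.Perm.mul_apply, Fin.revPerm_apply]
        have h2 : π * Fin.revPerm * Fin.revPerm = π := by rw [mul_assoc, hone, mul_one]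
        rw [h1, h2]
    rw [hre]
    simp only [hkey, Finset.mul_sum, map_sum, map_mul, map_inv₀, map_natCast]
    refine Finset.sum_congr rfl fun ρ _ => by ring
  -- (7) J = K on the range of P
  have hJK : ∀ ψ : Hsp n, symProj D ψ = ψ → J ψ = K ψ := by
    intro ψ hfix
    have h1 : J ψ = symProj D (K ψ) := by
      conv_lhs => rw [← hfix]
      exact hJP ψ
    have hDD : (D Fin.revPerm : Hsp n →L[ℂ] Hsp n)
        ((D Fin.revPerm : Hsp n →L[ℂ] Hsp n) (K ψ)) = K ψ := by
      have hc : ((D Fin.revPerm : Hsp n →L[ℂ] Hsp n) * (D Fin.revPerm : Hsp n →L[ℂ] Hsp n))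
          = ((D ((Fin.revPerm : Equiv.Perm (Fin n)) * Fin.revPerm) : Hsp n →L[ℂ] Hsp n)) := by
        rw [map_mul]; rfl
      have hone : (Fin.revPerm : Equiv.Perm (Fin n)) * Fin.revPerm = 1 := by
        ext i; simp [Equiv.Perm.mul_apply, Fin.rev_rev]
      rw [← ContinuousLinearMap.mul_apply, hc, hone, map_one]
      rfl
    have h2 : K ψ = symProj D (K ψ) := by
      conv_lhs => rw [← hDD, ← hJDK ψ, h1, D_symProj]
    rw [h1, ← h2]
  -- (8) J maps the range of P onto itself
  have hmapsto : ∀ ψ : Hsp n, symProj D ψ = ψ → symProj D (J ψ) = J ψ := by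
    intro ψ hfix
    have h1 : J ψ = symProj D (K ψ) := by
      conv_lhs => rw [← hfix]
      exact hJP ψ
    rw [h1, symProj_idem]
  refine ⟨hadd, hsmul, hnorm, hinv, hinner, hJP, hJK, ?_⟩
  apply Set.Subset.antisymm
  · rintro χ ⟨ψ, hψ, rfl⟩
    exact hmapsto ψ hψ
  · intro ψ hψ
    exact ⟨J ψ, hmapsto ψ hψ, hinv ψ⟩


end
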